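/- Let H be a Hopf algebra and A a bialgebra such that (A, μ) is a right H-Hopf module algebra and (A, Δ) is a right H-Hopf module coalgebra (with the same underlying right H-Hopf module structure). Then (A, P_R, P_R) with P_R(a) = a_(0)·S(a_(1)) is a Rota-Baxter bialgebra of weight (−1, −1): P_R(x)P_R(y) = P_R(xP_R(y)) + P_R(P_R(x)y) − P_R(xy) and (P_R⊗P_R)Δ = (id⊗P_R)ΔP_R + (P_R⊗id)ΔP_R − ΔP_R. -/

import Mathlib

open TensorProduct LinearMap

/-- A right Hopf module over a Hopf algebra `H`: `act` is a right `H`-module structure,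
`ρ` is a right `H`-comodule structure, and the compatibility `ρ (m · h) = ρ(m) Δ(h)` holds. -/
def IsRightHopfModule (K : Type*) [Field K] (H : Type*) [Ring H] [HopfAlgebra K H]
    {M : Type*} [AddCommGroup M] [Module K M]
    (act : M ⊗[K] H →ₗ[K] M) (ρ : M →ₗ[K] M ⊗[K] H) : Prop :=
  -- right module axioms
  (∀ (m : M) (h h' : H), act (act (m ⊗ₜ[K] h) ⊗ₜ[K] h') = act (m ⊗ₜ[K] (h * h'))) ∧
  (∀ m : M, act (m ⊗ₜ[K] (1 : H)) = m) ∧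
  -- right comodule axioms: coassociativity and counitality
  (rTensor H ρ ∘ₗ ρ =
    (TensorProduct.assoc K M H H).symm.toLinearMap ∘ₗ lTensor M (Coalgebra.comul (R := K)) ∘ₗ ρ) ∧
  (∀ m : M, (TensorProduct.rid K M) ((lTensor M (Coalgebra.counit (R := K))) (ρ m)) = m) ∧
  -- Hopf module compatibility: ρ(m·h) = m₍₀₎·h₁ ⊗ m₍₁₎h₂
  (ρ ∘ₗ act =
    TensorProduct.map act (LinearMap.mul' K H) ∘ₗ
      (tensorTensorTensorComm K M H H H).toLinearMap ∘ₗ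
        TensorProduct.map ρ (Coalgebra.comul (R := K)))



/-- A right `H`-Hopf module coalgebra: a right Hopf module `C` with a coassociative
comultiplication `D` satisfying `c₍₀₎₁ ⊗ c₍₀₎₂ ⊗ c₍₁₎ = c₁ ⊗ c₂₍₀₎ ⊗ c₂₍₁₎` and
`Δ(c·h) = c₁·h₁ ⊗ c₂·h₂`. -/
def IsRightHopfModuleCoalgebra (K : Type*) [Field K] (H : Type*) [Ring H] [HopfAlgebra K H]
    {C : Type*} [AddCommGroup C] [Module K C]
    (act : C ⊗[K] H →ₗ[K] C) (ρ : C →ₗ[K] C ⊗[K] H) (D : C →ₗ[K] C ⊗[K] C) : Prop :=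
  IsRightHopfModule K H act ρ ∧
  -- coassociativity of D
  (rTensor C D ∘ₗ D = (TensorProduct.assoc K C C C).symm.toLinearMap ∘ₗ lTensor C D ∘ₗ D) ∧
  -- c₍₀₎₁ ⊗ c₍₀₎₂ ⊗ c₍₁₎ = c₁ ⊗ c₂₍₀₎ ⊗ c₂₍₁₎
  (rTensor H D ∘ₗ ρ = (TensorProduct.assoc K C C H).symm.toLinearMap ∘ₗ lTensor C ρ ∘ₗ D) ∧
  -- Δ(c·h) = c₁·h₁ ⊗ c₂·h₂
  (D ∘ₗ act =
    TensorProduct.map act act ∘ₗ (tensorTensorTensorComm K C C H H).toLinearMap ∘ₗ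
      TensorProduct.map D (Coalgebra.comul (R := K)))

/-- `(C, Q)` is a Rota–Baxter coalgebra of weight `γ`:
`Q(c₁)⊗Q(c₂) = Q(c)₁⊗Q(Q(c)₂) + Q(Q(c)₁)⊗Q(c)₂ + γ Q(c)₁⊗Q(c)₂`. -/
def IsRotaBaxterCoalgebra (K : Type*) [Field K] {C : Type*} [AddCommGroup C] [Module K C]
    (D : C →ₗ[K] C ⊗[K] C) (Q : C →ₗ[K] C) (γ : K) : Prop :=
  TensorProduct.map Q Q ∘ₗ D =
    lTensor C Q ∘ₗ D ∘ₗ Q + rTensor C Q ∘ₗ D ∘ₗ Q + γ • (D ∘ₗ Q)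

/-- A right `H`-Hopf module algebra: a right Hopf module `M` with an associative
multiplication `mul` satisfying `(mm')·h = m(m'·h)` and `ρ(mm') = m₍₀₎m'₍₀₎ ⊗ m₍₁₎m'₍₁₎`. -/
def IsRightHopfModuleAlgebra (K : Type*) [Field K] (H : Type*) [Ring H] [HopfAlgebra K H]
    {M : Type*} [AddCommGroup M] [Module K M]
    (act : M ⊗[K] H →ₗ[K] M) (ρ : M →ₗ[K] M ⊗[K] H) (mul : M ⊗[K] M →ₗ[K] M) : Prop :=
  IsRightHopfModule K H act ρ ∧
  -- associativity
  (∀ a b c : M, mul (mul (a ⊗ₜ[K] b) ⊗ₜ[K] c) = mul (a ⊗ₜ[K] mul (b ⊗ₜ[K] c))) ∧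
  -- (mm')·h = m(m'·h)
  (act ∘ₗ rTensor H mul = mul ∘ₗ lTensor M act ∘ₗ (TensorProduct.assoc K M M H).toLinearMap) ∧
  -- ρ(mm') = m₍₀₎m'₍₀₎ ⊗ m₍₁₎m'₍₁₎
  (ρ ∘ₗ mul = TensorProduct.map mul (LinearMap.mul' K H) ∘ₗ
    (tensorTensorTensorComm K M H M H).toLinearMap ∘ₗ TensorProduct.map ρ ρ)


set_option maxHeartbeats 1000000
set_option synthInstance.maxHeartbeats 400000
section RBaux
open Coalgebra

open TensorProduct LinearMap Coalgebra

section helpers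
variable {R : Type*} {A : Type*} [CommSemiring R] [AddCommMonoid A] [Module R A] [Coalgebra R A]

lemma sum_counit_smul {a : A} {ι : Type*} (r : Coalgebra.Repr R a ι) :
    ∑ i ∈ r.index, counit (R := R) (r.left i) • r.right i = a := by
  have h1 : ∑ i ∈ r.index, counit (R := R) (r.left i) • r.right i
      = TensorProduct.lid R A (∑ i ∈ r.index, counit (R := R) (r.left i) ⊗ₜ[R] r.right i) := by
    simp only [map_sum, TensorProduct.lid_tmul]
  rw [h1, Coalgebra.sum_counit_tmul_eq r]
  simp

lemma sum_smul_counit {a : A} {ι : Type*} (r : Coalgebra.Repr R a ι) :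
    ∑ i ∈ r.index, counit (R := R) (r.right i) • r.left i = a := by
  have h1 : ∑ i ∈ r.index, counit (R := R) (r.right i) • r.left i
      = TensorProduct.rid R A (∑ i ∈ r.index, r.left i ⊗ₜ[R] counit (R := R) (r.right i)) := by
    simp only [map_sum, TensorProduct.rid_tmul]
  rw [h1, Coalgebra.sum_tmul_counit_eq r]
  simp

end helpers

section conv
variable {R : Type*} [CommSemiring R] {C : Type*} [AddCommMonoid C] [Module R C]
  {B : Type*} [Semiring B] [Algebra R B]
  (Dc : C →ₗ[R] C ⊗[R] C) (Ec : C →ₗ[R] R)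

/-- convolution product -/
noncomputable def conv (f g : C →ₗ[R] B) : C →ₗ[R] B :=
  LinearMap.mul' R B ∘ₗ TensorProduct.map f g ∘ₗ Dc

lemma conv_apply (f g : C →ₗ[R] B) (c : C) :
    conv Dc f g c = LinearMap.mul' R B (TensorProduct.map f g (Dc c)) := rfl

lemma conv_assoc
    (hco : (TensorProduct.assoc R C C C).toLinearMap ∘ₗ Dc.rTensor C ∘ₗ Dc = Dc.lTensor C ∘ₗ Dc)
    (f g h : C →ₗ[R] B) : conv Dc (conv Dc f g) h = conv Dc f (conv Dc g h) := by
  have key : (LinearMap.mul' R B ∘ₗ TensorProduct.map (LinearMap.mul' R B ∘ₗ TensorProduct.map f g) h)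
      = (LinearMap.mul' R B ∘ₗ TensorProduct.map f (LinearMap.mul' R B ∘ₗ TensorProduct.map g h)) ∘ₗ
        (TensorProduct.assoc R C C C).toLinearMap := by
    apply TensorProduct.ext
    apply TensorProduct.ext
    ext x y z
    simp [mul_assoc]
  have e1 : TensorProduct.map (conv Dc f g) h
      = (TensorProduct.map (LinearMap.mul' R B ∘ₗ TensorProduct.map f g) h) ∘ₗ Dc.rTensor C := by
    apply TensorProduct.ext
    ext x y
    simp [conv]
  have e2 : TensorProduct.map f (conv Dc g h)
      = (TensorProduct.map f (LinearMap.mul' R B ∘ₗ TensorProduct.map g h)) ∘ₗ Dc.lTensor C := by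
    apply TensorProduct.ext
    ext x y
    simp [conv]
  show LinearMap.mul' R B ∘ₗ TensorProduct.map (conv Dc f g) h ∘ₗ Dc
      = LinearMap.mul' R B ∘ₗ TensorProduct.map f (conv Dc g h) ∘ₗ Dc
  rw [show TensorProduct.map (conv Dc f g) h ∘ₗ Dc
      = (TensorProduct.map (LinearMap.mul' R B ∘ₗ TensorProduct.map f g) h) ∘ₗ (Dc.rTensor C ∘ₗ Dc) by
    rw [← LinearMap.comp_assoc, e1]]
  rw [show TensorProduct.map f (conv Dc g h) ∘ₗ Dc
      = (TensorProduct.map f (LinearMap.mul' R B ∘ₗ TensorProduct.map g h)) ∘ₗ (Dc.lTensor C ∘ₗ Dc) by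
    rw [← LinearMap.comp_assoc, e2]]
  rw [← hco]
  rw [← LinearMap.comp_assoc, ← LinearMap.comp_assoc, key]
  simp only [LinearMap.comp_assoc]

lemma conv_unit_left
    (hl : Ec.rTensor C ∘ₗ Dc = TensorProduct.mk R R C 1) (f : C →ₗ[R] B) :
    conv Dc (Algebra.linearMap R B ∘ₗ Ec) f = f := by
  have e1 : TensorProduct.map (Algebra.linearMap R B ∘ₗ Ec) f
      = TensorProduct.map (Algebra.linearMap R B) f ∘ₗ Ec.rTensor C := by
    apply TensorProduct.ext
    ext x y
    simp
  ext c
  have h2 : (Ec.rTensor C) (Dc c) = (1:R) ⊗ₜ[R] c := LinearMap.congr_fun hl c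
  simp only [conv_apply, e1, LinearMap.comp_apply, h2, TensorProduct.map_tmul]
  simp

lemma conv_unit_right
    (hr : Ec.lTensor C ∘ₗ Dc = (TensorProduct.mk R C R).flip 1) (f : C →ₗ[R] B) :
    conv Dc f (Algebra.linearMap R B ∘ₗ Ec) = f := by
  have e1 : TensorProduct.map f (Algebra.linearMap R B ∘ₗ Ec)
      = TensorProduct.map f (Algebra.linearMap R B) ∘ₗ Ec.lTensor C := by
    apply TensorProduct.ext
    ext x y
    simp
  ext c
  have h2 : (Ec.lTensor C) (Dc c) = c ⊗ₜ[R] (1:R) := LinearMap.congr_fun hr c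
  simp only [conv_apply, e1, LinearMap.comp_apply, h2, TensorProduct.map_tmul]
  simp

lemma conv_eq_of_inv
    (hco : (TensorProduct.assoc R C C C).toLinearMap ∘ₗ Dc.rTensor C ∘ₗ Dc = Dc.lTensor C ∘ₗ Dc)
    (hl : Ec.rTensor C ∘ₗ Dc = TensorProduct.mk R R C 1)
    (hr : Ec.lTensor C ∘ₗ Dc = (TensorProduct.mk R C R).flip 1)
    (x m y : C →ₗ[R] B)
    (h1 : conv Dc x m = Algebra.linearMap R B ∘ₗ Ec)
    (h2 : conv Dc m y = Algebra.linearMap R B ∘ₗ Ec) :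
    x = y := by
  have : conv Dc x (conv Dc m y) = conv Dc (conv Dc x m) y := (conv_assoc Dc hco x m y).symm
  rw [h1, h2, conv_unit_right Dc Ec hr, conv_unit_left Dc Ec hl] at this
  exact this

end conv

section HopfAux
set_option maxHeartbeats 1000000
set_option synthInstance.maxHeartbeats 400000

variable {K : Type*} [Field K] {H : Type*} [Ring H] [HopfAlgebra K H]

noncomputable def Delta2 : H ⊗[K] H →ₗ[K] (H ⊗[K] H) ⊗[K] (H ⊗[K] H) :=
  (tensorTensorTensorComm K H H H H).toLinearMap ∘ₗ
    TensorProduct.map (Coalgebra.comul (R := K)) (Coalgebra.comul (R := K))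

noncomputable def Eps2 : H ⊗[K] H →ₗ[K] K :=
  LinearMap.mul' K K ∘ₗ TensorProduct.map (Coalgebra.counit (R := K)) (Coalgebra.counit (R := K))

lemma Delta2_tmul (a b : H) :
    Delta2 (K := K) (a ⊗ₜ[K] b) = (tensorTensorTensorComm K H H H H)
      ((Coalgebra.comul (R := K) a) ⊗ₜ[K] (Coalgebra.comul (R := K) b)) := rfl

lemma Eps2_tmul (a b : H) :
    Eps2 (K := K) (a ⊗ₜ[K] b)
      = Coalgebra.counit (R := K) a * Coalgebra.counit (R := K) b := rfl

/-- the big shuffle -/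
noncomputable def Phi4 : (H ⊗[K] (H ⊗[K] H)) ⊗[K] (H ⊗[K] (H ⊗[K] H)) →ₗ[K]
    (H ⊗[K] H) ⊗[K] ((H ⊗[K] H) ⊗[K] (H ⊗[K] H)) :=
  lTensor (H ⊗[K] H) (tensorTensorTensorComm K H H H H).toLinearMap ∘ₗ
    (tensorTensorTensorComm K H (H ⊗[K] H) H (H ⊗[K] H)).toLinearMap

lemma Phi4_tmul (x p : H) (s t : H ⊗[K] H) :
    Phi4 (K := K) ((x ⊗ₜ[K] s) ⊗ₜ[K] (p ⊗ₜ[K] t))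
      = (x ⊗ₜ[K] p) ⊗ₜ[K] (tensorTensorTensorComm K H H H H (s ⊗ₜ[K] t)) := by
  simp [Phi4]

lemma X2 (u v : H ⊗[K] H) :
    (TensorProduct.assoc K (H ⊗[K] H) (H ⊗[K] H) (H ⊗[K] H))
      ((rTensor (H ⊗[K] H) (Delta2 (K := K))) (tensorTensorTensorComm K H H H H (u ⊗ₜ[K] v)))
    = Phi4 (K := K)
        (((TensorProduct.assoc K H H H) ((rTensor H (Coalgebra.comul (R := K))) u)) ⊗ₜ[K]
         ((TensorProduct.assoc K H H H) ((rTensor H (Coalgebra.comul (R := K))) v))) := by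
  induction u using TensorProduct.induction_on with
  | zero => simp only [zero_tmul, tmul_zero, map_zero]
  | add u1 u2 h1 h2 => simp only [add_tmul, map_add, tmul_add] at *; rw [h1, h2]
  | tmul x y =>
    induction v using TensorProduct.induction_on with
    | zero => simp only [zero_tmul, tmul_zero, map_zero]
    | add v1 v2 h1 h2 => simp only [add_tmul, tmul_add, map_add] at *; rw [h1, h2]
    | tmul p q =>
      simp only [tensorTensorTensorComm_tmul, rTensor_tmul, Delta2_tmul, _root_.TensorProduct.assoc_tmul]
      -- now generalize comul x and comul p
      generalize (Coalgebra.comul (R := K) x) = s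
      generalize (Coalgebra.comul (R := K) p) = t
      induction s using TensorProduct.induction_on with
      | zero => simp only [zero_tmul, tmul_zero, map_zero]
      | add s1 s2 h1 h2 => simp only [add_tmul, tmul_add, map_add] at *; rw [h1, h2]
      | tmul x1 x2 =>
        induction t using TensorProduct.induction_on with
        | zero => simp only [zero_tmul, tmul_zero, map_zero]
        | add t1 t2 h1 h2 => simp only [add_tmul, tmul_add, map_add] at *; rw [h1, h2]
        | tmul p1 p2 => simp [Phi4]

lemma Y2 (u v : H ⊗[K] H) :
    (lTensor (H ⊗[K] H) (Delta2 (K := K))) (tensorTensorTensorComm K H H H H (u ⊗ₜ[K] v))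
    = Phi4 (K := K)
        (((lTensor H (Coalgebra.comul (R := K))) u) ⊗ₜ[K]
         ((lTensor H (Coalgebra.comul (R := K))) v)) := by
  induction u using TensorProduct.induction_on with
  | zero => simp only [zero_tmul, tmul_zero, map_zero]
  | add u1 u2 h1 h2 => simp only [add_tmul, map_add, tmul_add] at *; rw [h1, h2]
  | tmul x y =>
    induction v using TensorProduct.induction_on with
    | zero => simp only [zero_tmul, tmul_zero, map_zero]
    | add v1 v2 h1 h2 => simp only [add_tmul, tmul_add, map_add] at *; rw [h1, h2]
    | tmul p q =>
      simp only [tensorTensorTensorComm_tmul, lTensor_tmul, Delta2_tmul]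
      generalize (Coalgebra.comul (R := K) y) = s
      generalize (Coalgebra.comul (R := K) q) = t
      induction s using TensorProduct.induction_on with
      | zero => simp only [zero_tmul, tmul_zero, map_zero]
      | add s1 s2 h1 h2 => simp only [add_tmul, tmul_add, map_add] at *; rw [h1, h2]
      | tmul x1 x2 =>
        induction t using TensorProduct.induction_on with
        | zero => simp only [zero_tmul, tmul_zero, map_zero]
        | add t1 t2 h1 h2 => simp only [add_tmul, tmul_add, map_add] at *; rw [h1, h2]
        | tmul p1 p2 => simp [Phi4]

lemma Delta2_coassoc :
    (TensorProduct.assoc K (H ⊗[K] H) (H ⊗[K] H) (H ⊗[K] H)).toLinearMap ∘ₗ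
      (Delta2 (K := K) (H := H)).rTensor _ ∘ₗ Delta2 = (Delta2 (K := K) (H := H)).lTensor _ ∘ₗ Delta2 := by
  apply TensorProduct.ext'
  intro a b
  simp only [LinearMap.comp_apply, LinearEquiv.coe_coe, Delta2_tmul]
  rw [X2, Y2]
  congr 2
  · exact Coalgebra.coassoc_apply a
  · exact Coalgebra.coassoc_apply b


lemma mul_tmul_one_smul (x y : K) (u v : H) :
    (x*y) ⊗ₜ[K] (u ⊗ₜ[K] v) = (1:K) ⊗ₜ[K] ((x•u) ⊗ₜ[K] (y•v)) := by
  have h1 : (x*y) ⊗ₜ[K] (u ⊗ₜ[K] v) = ((x*y) • (1:K)) ⊗ₜ[K] (u ⊗ₜ[K] v) := by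
    rw [smul_eq_mul, mul_one]
  rw [h1, TensorProduct.smul_tmul]
  congr 1
  rw [TensorProduct.smul_tmul', TensorProduct.tmul_smul, TensorProduct.smul_tmul', smul_smul,
    mul_comm y x]

lemma Eps2_law_left :
    (Eps2 (K := K) (H := H)).rTensor _ ∘ₗ Delta2 = TensorProduct.mk K K (H ⊗[K] H) 1 := by
  apply TensorProduct.ext'
  intro a b
  obtain ⟨ra⟩ : Nonempty (Coalgebra.Repr K a (H × H)) := ⟨Coalgebra.Repr.arbitrary K a⟩
  obtain ⟨rb⟩ : Nonempty (Coalgebra.Repr K b (H × H)) := ⟨Coalgebra.Repr.arbitrary K b⟩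
  simp only [LinearMap.comp_apply, Delta2_tmul, ← ra.eq, ← rb.eq]
  rw [TensorProduct.sum_tmul]
  simp only [map_sum, TensorProduct.tmul_sum]
  simp only [tensorTensorTensorComm_tmul, rTensor_tmul, Eps2_tmul]
  calc ∑ i ∈ ra.index, ∑ j ∈ rb.index,
        (Coalgebra.counit (R := K) (ra.left i) * Coalgebra.counit (R := K) (rb.left j)) ⊗ₜ[K]
          (ra.right i ⊗ₜ[K] rb.right j)
      = ∑ i ∈ ra.index, ∑ j ∈ rb.index, (1:K) ⊗ₜ[K]
          ((Coalgebra.counit (R := K) (ra.left i) • ra.right i) ⊗ₜ[K]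
           (Coalgebra.counit (R := K) (rb.left j) • rb.right j)) := by
        apply Finset.sum_congr rfl; intro i _; apply Finset.sum_congr rfl; intro j _
        exact mul_tmul_one_smul _ _ _ _
    _ = (1:K) ⊗ₜ[K] ((∑ i ∈ ra.index, Coalgebra.counit (R := K) (ra.left i) • ra.right i) ⊗ₜ[K]
          (∑ j ∈ rb.index, Coalgebra.counit (R := K) (rb.left j) • rb.right j)) := by
        simp only [TensorProduct.sum_tmul, TensorProduct.tmul_sum]
        rw [Finset.sum_comm]
    _ = (1:K) ⊗ₜ[K] (a ⊗ₜ[K] b) := by rw [_root_.sum_counit_smul ra, _root_.sum_counit_smul rb]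
lemma tmul_mul_counit_aux (x y : K) (u v : H) :
    (u ⊗ₜ[K] v) ⊗ₜ[K] (x*y) = ((x•u) ⊗ₜ[K] (y•v)) ⊗ₜ[K] (1:K) := by
  have h1 : (u ⊗ₜ[K] v) ⊗ₜ[K] (x*y) = (u ⊗ₜ[K] v) ⊗ₜ[K] ((x*y) • (1:K)) := by
    rw [smul_eq_mul, mul_one]
  rw [h1, TensorProduct.tmul_smul]
  rw [mul_smul, ← TensorProduct.smul_tmul]
  simp [TensorProduct.smul_tmul', smul_smul, mul_comm]

lemma Eps2_law_right :
    (Eps2 (K := K) (H := H)).lTensor _ ∘ₗ Delta2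
      = (TensorProduct.mk K (H ⊗[K] H) K).flip 1 := by
  apply TensorProduct.ext'
  intro a b
  obtain ⟨ra⟩ : Nonempty (Coalgebra.Repr K a (H × H)) := ⟨Coalgebra.Repr.arbitrary K a⟩
  obtain ⟨rb⟩ : Nonempty (Coalgebra.Repr K b (H × H)) := ⟨Coalgebra.Repr.arbitrary K b⟩
  simp only [LinearMap.comp_apply, Delta2_tmul, ← ra.eq, ← rb.eq]
  rw [TensorProduct.sum_tmul]
  simp only [map_sum, TensorProduct.tmul_sum]
  simp only [tensorTensorTensorComm_tmul, lTensor_tmul, Eps2_tmul]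
  calc ∑ i ∈ ra.index, ∑ j ∈ rb.index,
        (ra.left i ⊗ₜ[K] rb.left j) ⊗ₜ[K]
          (Coalgebra.counit (R := K) (ra.right i) * Coalgebra.counit (R := K) (rb.right j))
      = ∑ i ∈ ra.index, ∑ j ∈ rb.index,
          ((Coalgebra.counit (R := K) (ra.right i) • ra.left i) ⊗ₜ[K]
           (Coalgebra.counit (R := K) (rb.right j) • rb.left j)) ⊗ₜ[K] (1:K) := by
        apply Finset.sum_congr rfl; intro i _; apply Finset.sum_congr rfl; intro j _
        exact tmul_mul_counit_aux _ _ _ _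
    _ = ((∑ i ∈ ra.index, Coalgebra.counit (R := K) (ra.right i) • ra.left i) ⊗ₜ[K]
          (∑ j ∈ rb.index, Coalgebra.counit (R := K) (rb.right j) • rb.left j)) ⊗ₜ[K] (1:K) := by
        simp only [TensorProduct.sum_tmul, TensorProduct.tmul_sum]
        rw [Finset.sum_comm]
    _ = (a ⊗ₜ[K] b) ⊗ₜ[K] (1:K) := by rw [sum_smul_counit ra, sum_smul_counit rb]

/-- a representation of a product -/
noncomputable def reprMul {a b : H} {ι κ : Type*} (ra : Coalgebra.Repr K a ι) (rb : Coalgebra.Repr K b κ) :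
    Coalgebra.Repr K (a * b) (ι × κ) where
  index := ra.index ×ˢ rb.index
  left p := ra.left p.1 * rb.left p.2
  right p := ra.right p.1 * rb.right p.2
  eq := by
    rw [Finset.sum_product]
    rw [Bialgebra.comul_mul, ← ra.eq, ← rb.eq, Finset.sum_mul_sum]
    simp only [Algebra.TensorProduct.tmul_mul_tmul]

local notation "S" => HopfAlgebra.antipode (R := K) (A := H)

lemma antipode_mul_rev (a b : H) : S (a * b) = S b * S a := by
  have key : (S ∘ₗ LinearMap.mul' K H : H ⊗[K] H →ₗ[K] H)
      = LinearMap.mul' K H ∘ₗ TensorProduct.map S S ∘ₗ (TensorProduct.comm K H H).toLinearMap := by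
    apply conv_eq_of_inv Delta2 Eps2 Delta2_coassoc Eps2_law_left Eps2_law_right
      _ (LinearMap.mul' K H) _
    · -- conv Δ₂ (S∘μ) μ = u∘ε₂
      apply TensorProduct.ext'
      intro a b
      obtain ⟨ra⟩ : Nonempty (Coalgebra.Repr K a (H × H)) := ⟨Coalgebra.Repr.arbitrary K a⟩
      obtain ⟨rb⟩ : Nonempty (Coalgebra.Repr K b (H × H)) := ⟨Coalgebra.Repr.arbitrary K b⟩
      rw [conv_apply]
      simp only [Delta2_tmul, ← ra.eq, ← rb.eq]
      rw [TensorProduct.sum_tmul]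
      simp only [map_sum, TensorProduct.tmul_sum]
      simp only [tensorTensorTensorComm_tmul, TensorProduct.map_tmul, LinearMap.comp_apply,
        LinearMap.mul'_apply]
      have := HopfAlgebra.sum_antipode_mul_eq_algebraMap_counit (R := K) (reprMul ra rb)
      simp only [reprMul] at this
      rw [Finset.sum_product] at this
      rw [this]
      simp [Eps2_tmul, Bialgebra.counit_mul]
    · -- conv Δ₂ μ (μ∘(S⊗S)∘τ) = u∘ε₂
      apply TensorProduct.ext'
      intro a b
      obtain ⟨ra⟩ : Nonempty (Coalgebra.Repr K a (H × H)) := ⟨Coalgebra.Repr.arbitrary K a⟩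
      obtain ⟨rb⟩ : Nonempty (Coalgebra.Repr K b (H × H)) := ⟨Coalgebra.Repr.arbitrary K b⟩
      rw [conv_apply]
      simp only [Delta2_tmul, ← ra.eq, ← rb.eq]
      rw [TensorProduct.sum_tmul]
      simp only [map_sum, TensorProduct.tmul_sum]
      simp only [tensorTensorTensorComm_tmul, TensorProduct.map_tmul, LinearMap.comp_apply,
        LinearEquiv.coe_coe, TensorProduct.comm_tmul, LinearMap.mul'_apply]
      calc ∑ i ∈ ra.index, ∑ j ∈ rb.index,
            ra.left i * rb.left j * (S (rb.right j) * S (ra.right i))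
          = ∑ i ∈ ra.index, ra.left i *
              ((∑ j ∈ rb.index, rb.left j * S (rb.right j)) * S (ra.right i)) := by
            apply Finset.sum_congr rfl; intro i _
            rw [Finset.sum_mul, Finset.mul_sum]
            apply Finset.sum_congr rfl; intro j _
            noncomm_ring
        _ = ∑ i ∈ ra.index, Coalgebra.counit (R := K) b • (ra.left i * S (ra.right i)) := by
            apply Finset.sum_congr rfl; intro i _
            rw [HopfAlgebra.sum_mul_antipode_eq_smul rb, smul_mul_assoc, one_mul, mul_smul_comm]
        _ = Coalgebra.counit (R := K) b • (Coalgebra.counit (R := K) a • (1:H)) := by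
            rw [← Finset.smul_sum, HopfAlgebra.sum_mul_antipode_eq_smul ra]
        _ = (Algebra.linearMap K H ∘ₗ Eps2) (a ⊗ₜ[K] b) := by
            simp only [LinearMap.comp_apply, Eps2_tmul, Algebra.linearMap_apply,
              Algebra.algebraMap_eq_smul_one]
            rw [smul_smul, mul_comm]
  exact LinearMap.congr_fun key (a ⊗ₜ[K] b) |>.trans (by simp)

lemma counit_antipode (a : H) :
    Coalgebra.counit (R := K) (S a) = Coalgebra.counit (R := K) a := by
  obtain ⟨r⟩ : Nonempty (Coalgebra.Repr K a (H × H)) := ⟨Coalgebra.Repr.arbitrary K a⟩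
  have h1 := congrArg (Coalgebra.counit (R := K)) (HopfAlgebra.sum_antipode_mul_eq_algebraMap_counit (R := K) r)
  rw [map_sum] at h1
  simp only [Bialgebra.counit_mul, Bialgebra.counit_algebraMap] at h1
  calc Coalgebra.counit (R := K) (S a)
      = Coalgebra.counit (R := K) (S (∑ i ∈ r.index, Coalgebra.counit (R := K) (r.right i) • r.left i)) := by
        rw [sum_smul_counit r]
    _ = ∑ i ∈ r.index, Coalgebra.counit (R := K) (S (r.left i)) * Coalgebra.counit (R := K) (r.right i) := by
        rw [map_sum, map_sum]
        apply Finset.sum_congr rfl; intro i _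
        rw [map_smul, map_smul, smul_eq_mul, mul_comm]
    _ = Coalgebra.counit (R := K) a := h1

/-- `B₁(y ⊗ (c⊗d)) = Δy * (S d ⊗ S c)` -/
noncomputable def Bmap : H ⊗[K] (H ⊗[K] H) →ₗ[K] H ⊗[K] H :=
  LinearMap.mul' K (H ⊗[K] H) ∘ₗ
    TensorProduct.map (Coalgebra.comul (R := K))
      ((TensorProduct.comm K H H).toLinearMap ∘ₗ TensorProduct.map S S)

lemma Bmap_apply {y : H} {ι : Type*} (ry : Coalgebra.Repr K y ι) (c d : H) :
    Bmap (K := K) (y ⊗ₜ[K] (c ⊗ₜ[K] d))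
      = ∑ l ∈ ry.index, (ry.left l * S d) ⊗ₜ[K] (ry.right l * S c) := by
  simp only [Bmap, LinearMap.comp_apply, TensorProduct.map_tmul, LinearEquiv.coe_coe,
    TensorProduct.comm_tmul, ← ry.eq]
  rw [LinearMap.mul'_apply, Finset.sum_mul]
  apply Finset.sum_congr rfl; intro l _
  rw [Algebra.TensorProduct.tmul_mul_tmul]

lemma antipode_comul (a : H) :
    Coalgebra.comul (R := K) (S a)
      = TensorProduct.comm K H H (TensorProduct.map S S (Coalgebra.comul (R := K) a)) := by
  have key : (Coalgebra.comul (R := K) ∘ₗ S : H →ₗ[K] H ⊗[K] H)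
      = (TensorProduct.comm K H H).toLinearMap ∘ₗ TensorProduct.map S S ∘ₗ
          Coalgebra.comul (R := K) := by
    apply conv_eq_of_inv (Coalgebra.comul (R := K)) (Coalgebra.counit (R := K))
      Coalgebra.coassoc Coalgebra.rTensor_counit_comp_comul Coalgebra.lTensor_counit_comp_comul
      _ (Coalgebra.comul (R := K)) _
    · -- conv (Δ∘S) Δ = uε
      ext a
      obtain ⟨r⟩ : Nonempty (Coalgebra.Repr K a (H × H)) := ⟨Coalgebra.Repr.arbitrary K a⟩
      rw [conv_apply, ← r.eq]
      simp only [map_sum, TensorProduct.map_tmul, LinearMap.comp_apply, LinearMap.mul'_apply]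
      calc ∑ i ∈ r.index, Coalgebra.comul (R := K) (S (r.left i)) * Coalgebra.comul (R := K) (r.right i)
          = Coalgebra.comul (R := K) (∑ i ∈ r.index, S (r.left i) * r.right i) := by
            rw [map_sum]
            apply Finset.sum_congr rfl; intro i _
            rw [Bialgebra.comul_mul]
        _ = (Algebra.linearMap K (H ⊗[K] H) ∘ₗ Coalgebra.counit (R := K)) a := by
            rw [HopfAlgebra.sum_antipode_mul_eq_algebraMap_counit r]
            simp [Bialgebra.comul_algebraMap]
    · -- conv Δ (τ∘(S⊗S)∘Δ) = uε
      ext a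
      obtain ⟨r⟩ : Nonempty (Coalgebra.Repr K a (H × H)) := ⟨Coalgebra.Repr.arbitrary K a⟩
      set Li := fun i => Coalgebra.Repr.arbitrary K (r.left i) with hLi
      rw [conv_apply, ← r.eq]
      simp only [map_sum, TensorProduct.map_tmul, LinearMap.mul'_apply]
      -- step 0: rewrite as B₁ applied to ∑ lᵢ ⊗ Δ(rᵢ)
      have step0 : ∀ i, Coalgebra.comul (R := K) (r.left i) *
            ((TensorProduct.comm K H H).toLinearMap ∘ₗ TensorProduct.map S S ∘ₗ
              Coalgebra.comul (R := K)) (r.right i)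
          = Bmap (K := K) (r.left i ⊗ₜ[K] Coalgebra.comul (R := K) (r.right i)) := by
        intro i
        simp only [Bmap, LinearMap.comp_apply, TensorProduct.map_tmul, LinearMap.mul'_apply]
      simp only [step0]
      -- step 1: coassociativity regrouping
      have step1 : ∑ i ∈ r.index, r.left i ⊗ₜ[K] Coalgebra.comul (R := K) (r.right i)
          = ∑ i ∈ r.index, ∑ k ∈ (Li i).index,
              (Li i).left k ⊗ₜ[K] ((Li i).right k ⊗ₜ[K] r.right i) := by
        have hco := Coalgebra.coassoc_apply (R := K) a
        rw [← r.eq] at hco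
        simp only [map_sum, rTensor_tmul, lTensor_tmul] at hco
        rw [← hco]
        apply Finset.sum_congr rfl; intro i _
        rw [← (Li i).eq]
        rw [TensorProduct.sum_tmul, map_sum]
        apply Finset.sum_congr rfl; intro k _
        simp
      rw [← map_sum, step1, map_sum]
      -- step 2: per-i collapse
      have step2 : ∀ i ∈ r.index,
          Bmap (K := K) (∑ k ∈ (Li i).index, (Li i).left k ⊗ₜ[K] ((Li i).right k ⊗ₜ[K] r.right i))
            = (r.left i * S (r.right i)) ⊗ₜ[K] (1 : H) := by
        intro i _
        set Mik := fun k => Coalgebra.Repr.arbitrary K ((Li i).left k) with hMik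
        set Nik := fun k => Coalgebra.Repr.arbitrary K ((Li i).right k) with hNik
        set Gz := TensorProduct.map (LinearMap.mulRight K (S (r.right i)))
          (LinearMap.mul' K H ∘ₗ lTensor H S) with hGz
        have hGz_apply : ∀ (x y w : H), Gz (x ⊗ₜ[K] (y ⊗ₜ[K] w)) = (x * S (r.right i)) ⊗ₜ[K] (y * S w) := by
          intro x y w
          simp [hGz]
        rw [map_sum]
        calc ∑ k ∈ (Li i).index, Bmap (K := K) ((Li i).left k ⊗ₜ[K] ((Li i).right k ⊗ₜ[K] r.right i))
            = ∑ k ∈ (Li i).index, ∑ l ∈ (Mik k).index,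
                Gz ((Mik k).left l ⊗ₜ[K] ((Mik k).right l ⊗ₜ[K] (Li i).right k)) := by
              apply Finset.sum_congr rfl; intro k _
              rw [Bmap_apply (Mik k)]
              apply Finset.sum_congr rfl; intro l _
              rw [hGz_apply]
          _ = Gz (∑ k ∈ (Li i).index, ∑ l ∈ (Mik k).index,
                (Mik k).left l ⊗ₜ[K] ((Mik k).right l ⊗ₜ[K] (Li i).right k)) := by
              rw [map_sum]; apply Finset.sum_congr rfl; intro k _; rw [map_sum]
          _ = Gz (∑ k ∈ (Li i).index, ∑ l ∈ (Nik k).index,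
                (Li i).left k ⊗ₜ[K] ((Nik k).left l ⊗ₜ[K] (Nik k).right l)) := by
              rw [Coalgebra.sum_tmul_tmul_eq (Li i) Mik Nik]
          _ = ∑ k ∈ (Li i).index, ((Li i).left k * S (r.right i)) ⊗ₜ[K]
                (∑ l ∈ (Nik k).index, (Nik k).left l * S ((Nik k).right l)) := by
              rw [map_sum]; apply Finset.sum_congr rfl; intro k _; rw [map_sum]
              rw [TensorProduct.tmul_sum]
              apply Finset.sum_congr rfl; intro l _
              rw [hGz_apply]
          _ = ∑ k ∈ (Li i).index, (Coalgebra.counit (R := K) ((Li i).right k)) •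
                (((Li i).left k * S (r.right i)) ⊗ₜ[K] (1 : H)) := by
              apply Finset.sum_congr rfl; intro k _
              rw [HopfAlgebra.sum_mul_antipode_eq_smul (Nik k), TensorProduct.tmul_smul]
          _ = (r.left i * S (r.right i)) ⊗ₜ[K] (1 : H) := by
              simp only [TensorProduct.smul_tmul', ← smul_mul_assoc]
              rw [← TensorProduct.sum_tmul, ← Finset.sum_mul, sum_smul_counit (Li i)]
      rw [Finset.sum_congr rfl step2]
      rw [← TensorProduct.sum_tmul, HopfAlgebra.sum_mul_antipode_eq_smul r]
      simp only [LinearMap.comp_apply, Algebra.linearMap_apply, Algebra.algebraMap_eq_smul_one,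
        Algebra.TensorProduct.one_def, TensorProduct.smul_tmul']
  exact LinearMap.congr_fun key a

end HopfAux
end RBaux

theorem hopfModuleBialgebra_rotaBaxterBialgebra
    (K : Type*) [Field K] (H : Type*) [Ring H] [HopfAlgebra K H]
    (A : Type*) [AddCommGroup A] [Module K A]
    (act : A ⊗[K] H →ₗ[K] A) (ρ : A →ₗ[K] A ⊗[K] H)
    (mul : A ⊗[K] A →ₗ[K] A) (D : A →ₗ[K] A ⊗[K] A)
    -- A is a bialgebra: Δ(ab) = Δ(a)Δ(b)
    (hbialg : D ∘ₗ mul = TensorProduct.map mul mul ∘ₗ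
      (tensorTensorTensorComm K A A A A).toLinearMap ∘ₗ TensorProduct.map D D)
    -- (A, μ) is a right H-Hopf module algebra
    (halg : IsRightHopfModuleAlgebra K H act ρ mul)
    -- (A, Δ) is a right H-Hopf module coalgebra
    (hcoalg : IsRightHopfModuleCoalgebra K H act ρ D)
    -- P_R(a) = a₍₀₎ · S(a₍₁₎)
    (P : A →ₗ[K] A)
    (hP : P = act ∘ₗ lTensor A (HopfAlgebra.antipode (R := K)) ∘ₗ ρ) :
    (∀ x y : A, mul (P x ⊗ₜ[K] P y) =
      P (mul (x ⊗ₜ[K] P y)) + P (mul (P x ⊗ₜ[K] y)) - P (mul (x ⊗ₜ[K] y))) ∧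
    IsRotaBaxterCoalgebra K D P (-1) := by
  obtain ⟨⟨act_act, act_one, ρco, ρcounit, ρ_act⟩, mulAssoc, act_mul, ρ_mul⟩ := halg
  obtain ⟨-, Dco, ρD, D_act⟩ := hcoalg
  have hPapp : ∀ m : A,
      P m = act ((lTensor A (HopfAlgebra.antipode (R := K) (A := H))) (ρ m)) := by
    intro m; rw [hP]; rfl
  have Pexp : ∀ (m : A) (s : Finset (A × H)), ρ m = ∑ p ∈ s, p.1 ⊗ₜ[K] p.2 →
      P m = ∑ p ∈ s, act (p.1 ⊗ₜ[K] HopfAlgebra.antipode (R := K) p.2) := by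
    intro m s hs
    rw [hPapp, hs, map_sum, map_sum]
    simp only [lTensor_tmul]
  -- elementwise hypotheses
  have E_ρact : ∀ (n : A) (h : H), ρ (act (n ⊗ₜ[K] h))
      = TensorProduct.map act (LinearMap.mul' K H)
          ((tensorTensorTensorComm K A H H H) (ρ n ⊗ₜ[K] Coalgebra.comul (R := K) h)) := by
    intro n h
    have h0 := LinearMap.congr_fun ρ_act (n ⊗ₜ[K] h)
    simpa only [LinearMap.comp_apply, TensorProduct.map_tmul, LinearEquiv.coe_coe] using h0
  have E_Dact : ∀ (n : A) (h : H), D (act (n ⊗ₜ[K] h))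
      = TensorProduct.map act act
          ((tensorTensorTensorComm K A A H H) (D n ⊗ₜ[K] Coalgebra.comul (R := K) h)) := by
    intro n h
    have h0 := LinearMap.congr_fun D_act (n ⊗ₜ[K] h)
    simpa only [LinearMap.comp_apply, TensorProduct.map_tmul, LinearEquiv.coe_coe] using h0
  have E_actmul : ∀ (u v : A) (h : H),
      act (mul (u ⊗ₜ[K] v) ⊗ₜ[K] h) = mul (u ⊗ₜ[K] act (v ⊗ₜ[K] h)) := by
    intro u v h
    have h0 := LinearMap.congr_fun act_mul ((u ⊗ₜ[K] v) ⊗ₜ[K] h)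
    simpa only [LinearMap.comp_apply, rTensor_tmul, lTensor_tmul, LinearEquiv.coe_coe,
      TensorProduct.assoc_tmul] using h0
  have E_ρmul : ∀ (x y : A), ρ (mul (x ⊗ₜ[K] y))
      = TensorProduct.map mul (LinearMap.mul' K H)
          ((tensorTensorTensorComm K A H A H) (ρ x ⊗ₜ[K] ρ y)) := by
    intro x y
    have h0 := LinearMap.congr_fun ρ_mul (x ⊗ₜ[K] y)
    simpa only [LinearMap.comp_apply, TensorProduct.map_tmul, LinearEquiv.coe_coe] using h0
  -- L2 : P (m · h) = ε(h) • P m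
  have L2 : ∀ (m : A) (h : H),
      P (act (m ⊗ₜ[K] h)) = Coalgebra.counit (R := K) h • P m := by
    intro m h
    obtain ⟨sm, hsm⟩ := TensorProduct.exists_finset (ρ m)
    obtain ⟨rh⟩ : Nonempty (Coalgebra.Repr K h (H × H)) := ⟨Coalgebra.Repr.arbitrary K h⟩
    have e1 : ρ (act (m ⊗ₜ[K] h)) = ∑ p ∈ sm, ∑ j ∈ rh.index,
        act (p.1 ⊗ₜ[K] rh.left j) ⊗ₜ[K] (p.2 * rh.right j) := by
      rw [E_ρact, hsm, ← rh.eq, TensorProduct.sum_tmul]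
      simp only [map_sum, TensorProduct.tmul_sum]
      simp only [tensorTensorTensorComm_tmul, TensorProduct.map_tmul, LinearMap.mul'_apply]
    calc P (act (m ⊗ₜ[K] h))
        = act ((lTensor A (HopfAlgebra.antipode (R := K))) (ρ (act (m ⊗ₜ[K] h)))) := hPapp _
      _ = ∑ p ∈ sm, ∑ j ∈ rh.index, act (act (p.1 ⊗ₜ[K] rh.left j) ⊗ₜ[K]
            HopfAlgebra.antipode (R := K) (p.2 * rh.right j)) := by
          rw [e1]; simp only [map_sum, lTensor_tmul]
      _ = ∑ p ∈ sm, ∑ j ∈ rh.index, act (p.1 ⊗ₜ[K]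
            ((rh.left j * HopfAlgebra.antipode (R := K) (rh.right j)) *
              HopfAlgebra.antipode (R := K) p.2)) := by
          apply Finset.sum_congr rfl; intro p _; apply Finset.sum_congr rfl; intro j _
          rw [antipode_mul_rev, act_act, mul_assoc]
      _ = ∑ p ∈ sm, act (p.1 ⊗ₜ[K]
            ((∑ j ∈ rh.index, rh.left j * HopfAlgebra.antipode (R := K) (rh.right j)) *
              HopfAlgebra.antipode (R := K) p.2)) := by
          apply Finset.sum_congr rfl; intro p _
          rw [Finset.sum_mul, TensorProduct.tmul_sum, map_sum]
      _ = ∑ p ∈ sm, Coalgebra.counit (R := K) h •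
            act (p.1 ⊗ₜ[K] HopfAlgebra.antipode (R := K) p.2) := by
          apply Finset.sum_congr rfl; intro p _
          rw [HopfAlgebra.sum_mul_antipode_eq_smul rh, smul_mul_assoc, one_mul,
            TensorProduct.tmul_smul, map_smul]
      _ = Coalgebra.counit (R := K) h • P m := by
          rw [← Finset.smul_sum, Pexp m sm hsm]
  -- L1 : ρ (P m) = P m ⊗ 1
  have L1 : ∀ m : A, ρ (P m) = P m ⊗ₜ[K] (1 : H) := by
    intro m
    obtain ⟨sm, hsm⟩ := TensorProduct.exists_finset (ρ m)
    set Rp := fun (h : H) => Coalgebra.Repr.arbitrary K h with hRp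
    set Φ : (A ⊗[K] H) ⊗[K] (H ⊗[K] H) →ₗ[K] A ⊗[K] H :=
      TensorProduct.map act (LinearMap.mul' K H) ∘ₗ
        (tensorTensorTensorComm K A H H H).toLinearMap ∘ₗ
        lTensor (A ⊗[K] H) ((TensorProduct.comm K H H).toLinearMap ∘ₗ
          TensorProduct.map (HopfAlgebra.antipode (R := K)) (HopfAlgebra.antipode (R := K))) with hΦ
    have Φ_apply : ∀ (a : A) (g p q : H), Φ ((a ⊗ₜ[K] g) ⊗ₜ[K] (p ⊗ₜ[K] q))
        = act (a ⊗ₜ[K] HopfAlgebra.antipode (R := K) q) ⊗ₜ[K]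
            (g * HopfAlgebra.antipode (R := K) p) := by
      intro a g p q
      simp [hΦ]
    -- step 1 : ρ (P m) = Φ (∑ ρ p.1 ⊗ Δ p.2)
    have step1 : ρ (P m) = Φ (∑ p ∈ sm, ρ p.1 ⊗ₜ[K] Coalgebra.comul (R := K) p.2) := by
      rw [Pexp m sm hsm]
      simp only [map_sum]
      apply Finset.sum_congr rfl; intro p _
      rw [E_ρact]
      have : Coalgebra.comul (R := K) (HopfAlgebra.antipode (R := K) p.2)
          = TensorProduct.comm K H H (TensorProduct.map (HopfAlgebra.antipode (R := K))
              (HopfAlgebra.antipode (R := K)) (Coalgebra.comul (R := K) p.2)) :=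
        antipode_comul p.2
      rw [this, hΦ]
      simp only [LinearMap.comp_apply, lTensor_tmul, LinearEquiv.coe_coe]
    -- step 2 : regroup via comodule coassociativity
    have step2 : ∑ p ∈ sm, ρ p.1 ⊗ₜ[K] Coalgebra.comul (R := K) p.2
        = ∑ p ∈ sm, ∑ j ∈ (Rp p.2).index,
            (p.1 ⊗ₜ[K] (Rp p.2).left j) ⊗ₜ[K] Coalgebra.comul (R := K) ((Rp p.2).right j) := by
      have h0 := LinearMap.congr_fun ρco m
      simp only [LinearMap.comp_apply] at h0
      have h1 : (rTensor H ρ) (ρ m) = ∑ p ∈ sm, ρ p.1 ⊗ₜ[K] p.2 := by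
        rw [hsm, map_sum]; simp only [rTensor_tmul]
      have h2 : ((TensorProduct.assoc K A H H).symm.toLinearMap) ((lTensor A
          (Coalgebra.comul (R := K))) (ρ m)) = ∑ p ∈ sm, ∑ j ∈ (Rp p.2).index,
            (p.1 ⊗ₜ[K] (Rp p.2).left j) ⊗ₜ[K] (Rp p.2).right j := by
        rw [hsm, map_sum, map_sum]
        apply Finset.sum_congr rfl; intro p _
        rw [lTensor_tmul, ← (Rp p.2).eq, TensorProduct.tmul_sum, map_sum]
        apply Finset.sum_congr rfl; intro j _
        simp
      have h3 : ∑ p ∈ sm, ρ p.1 ⊗ₜ[K] p.2 = ∑ p ∈ sm, ∑ j ∈ (Rp p.2).index,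
          (p.1 ⊗ₜ[K] (Rp p.2).left j) ⊗ₜ[K] (Rp p.2).right j := by
        rw [← h1, ← h2, h0]
      have h4 := congrArg (lTensor (A ⊗[K] H) (Coalgebra.comul (R := K))) h3
      rw [map_sum, map_sum] at h4
      simp only [lTensor_tmul] at h4
      rw [h4]
      apply Finset.sum_congr rfl; intro p _
      rw [map_sum]
      simp only [lTensor_tmul]
    -- step 3+4 : per-p collapse
    rw [step1, step2, map_sum]
    have step4 : ∀ p ∈ sm, Φ (∑ j ∈ (Rp p.2).index,
        (p.1 ⊗ₜ[K] (Rp p.2).left j) ⊗ₜ[K] Coalgebra.comul (R := K) ((Rp p.2).right j))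
        = act (p.1 ⊗ₜ[K] HopfAlgebra.antipode (R := K) p.2) ⊗ₜ[K] (1 : H) := by
      intro p _
      set r := Rp p.2 with hr
      set Mij := fun j => Coalgebra.Repr.arbitrary K (r.left j) with hMij
      set Nij := fun j => Coalgebra.Repr.arbitrary K (r.right j) with hNij
      set Ga : H ⊗[K] (H ⊗[K] H) →ₗ[K] A ⊗[K] H :=
        (TensorProduct.comm K H A).toLinearMap ∘ₗ
          TensorProduct.map (LinearMap.mul' K H ∘ₗ lTensor H (HopfAlgebra.antipode (R := K)))
            (act ∘ₗ TensorProduct.mk K A H p.1 ∘ₗ (HopfAlgebra.antipode (R := K) (A := H))) ∘ₗ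
          (TensorProduct.assoc K H H H).symm.toLinearMap with hGa
      have Ga_apply : ∀ (x y z : H), Ga (x ⊗ₜ[K] (y ⊗ₜ[K] z))
          = act (p.1 ⊗ₜ[K] HopfAlgebra.antipode (R := K) z) ⊗ₜ[K]
              (x * HopfAlgebra.antipode (R := K) y) := by
        intro x y z
        simp [hGa]
      calc Φ (∑ j ∈ r.index, (p.1 ⊗ₜ[K] r.left j) ⊗ₜ[K] Coalgebra.comul (R := K) (r.right j))
          = ∑ j ∈ r.index, ∑ k ∈ (Nij j).index,
              Ga (r.left j ⊗ₜ[K] ((Nij j).left k ⊗ₜ[K] (Nij j).right k)) := by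
            rw [map_sum]
            apply Finset.sum_congr rfl; intro j _
            rw [← (Nij j).eq, TensorProduct.tmul_sum, map_sum]
            apply Finset.sum_congr rfl; intro k _
            rw [Φ_apply, Ga_apply]
        _ = Ga (∑ j ∈ r.index, ∑ k ∈ (Nij j).index,
              r.left j ⊗ₜ[K] ((Nij j).left k ⊗ₜ[K] (Nij j).right k)) := by
            rw [map_sum]; apply Finset.sum_congr rfl; intro j _; rw [map_sum]
        _ = Ga (∑ j ∈ r.index, ∑ k ∈ (Mij j).index,
              (Mij j).left k ⊗ₜ[K] ((Mij j).right k ⊗ₜ[K] r.right j)) := by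
            rw [Coalgebra.sum_tmul_tmul_eq r Mij Nij]
        _ = ∑ j ∈ r.index, ∑ k ∈ (Mij j).index,
              act (p.1 ⊗ₜ[K] HopfAlgebra.antipode (R := K) (r.right j)) ⊗ₜ[K]
                ((Mij j).left k * HopfAlgebra.antipode (R := K) ((Mij j).right k)) := by
            rw [map_sum]; apply Finset.sum_congr rfl; intro j _; rw [map_sum]
            apply Finset.sum_congr rfl; intro k _
            rw [Ga_apply]
        _ = ∑ j ∈ r.index, Coalgebra.counit (R := K) (r.left j) •
              (act (p.1 ⊗ₜ[K] HopfAlgebra.antipode (R := K) (r.right j)) ⊗ₜ[K] (1 : H)) := by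
            apply Finset.sum_congr rfl; intro j _
            rw [← TensorProduct.tmul_sum, HopfAlgebra.sum_mul_antipode_eq_smul (Mij j),
              TensorProduct.tmul_smul]
        _ = act (p.1 ⊗ₜ[K] HopfAlgebra.antipode (R := K) p.2) ⊗ₜ[K] (1 : H) := by
            have : ∀ j ∈ r.index, Coalgebra.counit (R := K) (r.left j) •
                (act (p.1 ⊗ₜ[K] HopfAlgebra.antipode (R := K) (r.right j)) ⊗ₜ[K] (1 : H))
                = act (p.1 ⊗ₜ[K] HopfAlgebra.antipode (R := K)
                    (Coalgebra.counit (R := K) (r.left j) • r.right j)) ⊗ₜ[K] (1 : H) := by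
              intro j _
              simp only [map_smul, TensorProduct.tmul_smul, ← TensorProduct.smul_tmul']
            rw [Finset.sum_congr rfl this]
            set g : H →ₗ[K] A ⊗[K] H := ((TensorProduct.mk K A H).flip 1) ∘ₗ act ∘ₗ
              TensorProduct.mk K A H p.1 ∘ₗ (HopfAlgebra.antipode (R := K) (A := H)) with hgdef
            have hg_apply : ∀ h : H, g h
                = act (p.1 ⊗ₜ[K] HopfAlgebra.antipode (R := K) h) ⊗ₜ[K] (1 : H) := fun h => rfl
            calc ∑ j ∈ r.index, act (p.1 ⊗ₜ[K] HopfAlgebra.antipode (R := K)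
                  (Coalgebra.counit (R := K) (r.left j) • r.right j)) ⊗ₜ[K] (1 : H)
                = ∑ j ∈ r.index, g (Coalgebra.counit (R := K) (r.left j) • r.right j) := by
                  simp only [hg_apply]
              _ = g (∑ j ∈ r.index, Coalgebra.counit (R := K) (r.left j) • r.right j) :=
                  (map_sum g _ _).symm
              _ = g p.2 := by rw [sum_counit_smul r]
              _ = act (p.1 ⊗ₜ[K] HopfAlgebra.antipode (R := K) p.2) ⊗ₜ[K] (1 : H) :=
                  hg_apply p.2
    rw [Finset.sum_congr rfl step4, ← TensorProduct.sum_tmul, ← Pexp m sm hsm]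
  -- algebra identities
  have Ha : ∀ x y : A, P (mul (P x ⊗ₜ[K] y)) = mul (P x ⊗ₜ[K] P y) := by
    intro x y
    obtain ⟨sy, hsy⟩ := TensorProduct.exists_finset (ρ y)
    have e1 : ρ (mul (P x ⊗ₜ[K] y)) = ∑ q ∈ sy, mul (P x ⊗ₜ[K] q.1) ⊗ₜ[K] q.2 := by
      rw [E_ρmul, L1 x, hsy]
      simp only [TensorProduct.tmul_sum, map_sum]
      simp only [tensorTensorTensorComm_tmul, TensorProduct.map_tmul, LinearMap.mul'_apply,
        one_mul]
    rw [hPapp, e1, map_sum, map_sum]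
    simp only [lTensor_tmul]
    have : ∀ q ∈ sy, act (mul (P x ⊗ₜ[K] q.1) ⊗ₜ[K] HopfAlgebra.antipode (R := K) q.2)
        = mul (P x ⊗ₜ[K] act (q.1 ⊗ₜ[K] HopfAlgebra.antipode (R := K) q.2)) := by
      intro q _
      rw [E_actmul]
    rw [Finset.sum_congr rfl this, ← map_sum, ← TensorProduct.tmul_sum, ← Pexp y sy hsy]
  have Hb : ∀ x y : A, P (mul (x ⊗ₜ[K] P y)) = P (mul (x ⊗ₜ[K] y)) := by
    intro x y
    obtain ⟨sx, hsx⟩ := TensorProduct.exists_finset (ρ x)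
    obtain ⟨sy, hsy⟩ := TensorProduct.exists_finset (ρ y)
    have e1 : ρ (mul (x ⊗ₜ[K] P y)) = ∑ p ∈ sx, mul (p.1 ⊗ₜ[K] P y) ⊗ₜ[K] p.2 := by
      rw [E_ρmul, L1 y, hsx]
      simp only [TensorProduct.sum_tmul, map_sum]
      simp only [tensorTensorTensorComm_tmul, TensorProduct.map_tmul, LinearMap.mul'_apply,
        mul_one]
    have lhs : P (mul (x ⊗ₜ[K] P y)) = ∑ p ∈ sx, ∑ q ∈ sy,
        mul (p.1 ⊗ₜ[K] act (act (q.1 ⊗ₜ[K] HopfAlgebra.antipode (R := K) q.2) ⊗ₜ[K]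
          HopfAlgebra.antipode (R := K) p.2)) := by
      rw [hPapp, e1, map_sum, map_sum]
      simp only [lTensor_tmul]
      apply Finset.sum_congr rfl; intro p _
      rw [E_actmul]
      rw [Pexp y sy hsy, TensorProduct.sum_tmul, map_sum, TensorProduct.tmul_sum, map_sum]
    have e2 : ρ (mul (x ⊗ₜ[K] y)) = ∑ p ∈ sx, ∑ q ∈ sy,
        mul (p.1 ⊗ₜ[K] q.1) ⊗ₜ[K] (p.2 * q.2) := by
      rw [E_ρmul, hsx, hsy]
      rw [TensorProduct.sum_tmul]
      simp only [map_sum, TensorProduct.tmul_sum]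
      simp only [tensorTensorTensorComm_tmul, TensorProduct.map_tmul, LinearMap.mul'_apply]
    have rhs : P (mul (x ⊗ₜ[K] y)) = ∑ p ∈ sx, ∑ q ∈ sy,
        mul (p.1 ⊗ₜ[K] act (act (q.1 ⊗ₜ[K] HopfAlgebra.antipode (R := K) q.2) ⊗ₜ[K]
          HopfAlgebra.antipode (R := K) p.2)) := by
      rw [hPapp, e2, map_sum, map_sum]
      simp only [map_sum, lTensor_tmul]
      apply Finset.sum_congr rfl; intro p _
      apply Finset.sum_congr rfl; intro q _
      rw [antipode_mul_rev, E_actmul, act_act]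
    rw [lhs, rhs]
  have star : ∀ (c : A) (sD : Finset (A × A)), D c = (∑ u ∈ sD, u.1 ⊗ₜ[K] u.2) →
      ∀ (sρ : (A × A) → Finset (A × H)),
      (∀ u ∈ sD, ρ u.2 = ∑ v ∈ sρ u, v.1 ⊗ₜ[K] v.2) →
      D (P c) = ∑ u ∈ sD, ∑ v ∈ sρ u, ∑ w ∈ (Coalgebra.Repr.arbitrary K v.2).index,
        act (u.1 ⊗ₜ[K] HopfAlgebra.antipode (R := K) ((Coalgebra.Repr.arbitrary K v.2).right w))
          ⊗ₜ[K] act (v.1 ⊗ₜ[K] HopfAlgebra.antipode (R := K)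
            ((Coalgebra.Repr.arbitrary K v.2).left w)) := by
    intro c sD hsD sρ hsρ
    obtain ⟨sc, hsc⟩ := TensorProduct.exists_finset (ρ c)
    set Θ : (A ⊗[K] A) ⊗[K] (H ⊗[K] H) →ₗ[K] A ⊗[K] A :=
      TensorProduct.map act act ∘ₗ
        (tensorTensorTensorComm K A A H H).toLinearMap ∘ₗ
        lTensor (A ⊗[K] A) ((TensorProduct.comm K H H).toLinearMap ∘ₗ
          TensorProduct.map (HopfAlgebra.antipode (R := K)) (HopfAlgebra.antipode (R := K))) with hΘ
    have Θ_apply : ∀ (a b : A) (k1 k2 : H), Θ ((a ⊗ₜ[K] b) ⊗ₜ[K] (k1 ⊗ₜ[K] k2))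
        = act (a ⊗ₜ[K] HopfAlgebra.antipode (R := K) k2) ⊗ₜ[K]
            act (b ⊗ₜ[K] HopfAlgebra.antipode (R := K) k1) := by
      intro a b k1 k2
      simp [hΘ]
    have step1 : D (P c) = Θ (∑ p ∈ sc, D p.1 ⊗ₜ[K] Coalgebra.comul (R := K) p.2) := by
      rw [Pexp c sc hsc, map_sum, map_sum]
      apply Finset.sum_congr rfl; intro p _
      rw [E_Dact, antipode_comul, hΘ]
      simp only [LinearMap.comp_apply, lTensor_tmul, LinearEquiv.coe_coe]
    have step2 : ∑ p ∈ sc, D p.1 ⊗ₜ[K] p.2 = ∑ u ∈ sD, ∑ v ∈ sρ u,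
        (u.1 ⊗ₜ[K] v.1) ⊗ₜ[K] v.2 := by
      have h0 := LinearMap.congr_fun ρD c
      simp only [LinearMap.comp_apply] at h0
      have h1 : (rTensor H D) (ρ c) = ∑ p ∈ sc, D p.1 ⊗ₜ[K] p.2 := by
        rw [hsc, map_sum]; simp only [rTensor_tmul]
      have h2 : ((TensorProduct.assoc K A A H).symm.toLinearMap) ((lTensor A ρ) (D c))
          = ∑ u ∈ sD, ∑ v ∈ sρ u, (u.1 ⊗ₜ[K] v.1) ⊗ₜ[K] v.2 := by
        rw [hsD, map_sum, map_sum]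
        apply Finset.sum_congr rfl; intro u hu
        rw [lTensor_tmul, hsρ u hu, TensorProduct.tmul_sum, map_sum]
        apply Finset.sum_congr rfl; intro v _
        simp
      rw [← h1, ← h2, h0]
    have step3 : ∑ p ∈ sc, D p.1 ⊗ₜ[K] Coalgebra.comul (R := K) p.2
        = ∑ u ∈ sD, ∑ v ∈ sρ u, (u.1 ⊗ₜ[K] v.1) ⊗ₜ[K] Coalgebra.comul (R := K) v.2 := by
      have h4 := congrArg (lTensor (A ⊗[K] A) (Coalgebra.comul (R := K))) step2
      rw [map_sum, map_sum] at h4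
      simp only [lTensor_tmul] at h4
      rw [h4]
      apply Finset.sum_congr rfl; intro u _
      rw [map_sum]
      simp only [lTensor_tmul]
    rw [step1, step3, map_sum]
    apply Finset.sum_congr rfl; intro u _
    rw [map_sum]
    apply Finset.sum_congr rfl; intro v _
    rw [← (Coalgebra.Repr.arbitrary K v.2).eq, TensorProduct.tmul_sum, map_sum]
    apply Finset.sum_congr rfl; intro w _
    rw [Θ_apply]
  have Hb' : ∀ c : A, (lTensor A P) (D (P c)) = D (P c) := by
    intro c
    obtain ⟨sD, hsD⟩ := TensorProduct.exists_finset (D c)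
    set sρ : (A × A) → Finset (A × H) := fun u => (TensorProduct.exists_finset (ρ u.2)).choose
      with hsρdef
    have hsρ : ∀ u ∈ sD, ρ u.2 = ∑ v ∈ sρ u, v.1 ⊗ₜ[K] v.2 := fun u _ =>
      (TensorProduct.exists_finset (ρ u.2)).choose_spec
    rw [star c sD hsD sρ hsρ]
    rw [map_sum]
    apply Finset.sum_congr rfl; intro u hu
    rw [map_sum]
    have lhs_u : ∀ v ∈ sρ u, (lTensor A P) (∑ w ∈ (Coalgebra.Repr.arbitrary K v.2).index,
        act (u.1 ⊗ₜ[K] HopfAlgebra.antipode (R := K) ((Coalgebra.Repr.arbitrary K v.2).right w))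
          ⊗ₜ[K] act (v.1 ⊗ₜ[K] HopfAlgebra.antipode (R := K)
            ((Coalgebra.Repr.arbitrary K v.2).left w)))
        = act (u.1 ⊗ₜ[K] HopfAlgebra.antipode (R := K) v.2) ⊗ₜ[K] P v.1 := by
      intro v _
      set r := Coalgebra.Repr.arbitrary K v.2 with hrv
      rw [map_sum]
      calc ∑ w ∈ r.index, (lTensor A P)
            (act (u.1 ⊗ₜ[K] HopfAlgebra.antipode (R := K) (r.right w)) ⊗ₜ[K]
              act (v.1 ⊗ₜ[K] HopfAlgebra.antipode (R := K) (r.left w)))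
          = ∑ w ∈ r.index, Coalgebra.counit (R := K) (r.left w) •
              (act (u.1 ⊗ₜ[K] HopfAlgebra.antipode (R := K) (r.right w)) ⊗ₜ[K] P v.1) := by
            apply Finset.sum_congr rfl; intro w _
            rw [lTensor_tmul, L2, counit_antipode, TensorProduct.tmul_smul]
        _ = act (u.1 ⊗ₜ[K] HopfAlgebra.antipode (R := K) v.2) ⊗ₜ[K] P v.1 := by
            have e : ∀ w ∈ r.index, Coalgebra.counit (R := K) (r.left w) •
                (act (u.1 ⊗ₜ[K] HopfAlgebra.antipode (R := K) (r.right w)) ⊗ₜ[K] P v.1)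
                = act (u.1 ⊗ₜ[K] HopfAlgebra.antipode (R := K)
                    (Coalgebra.counit (R := K) (r.left w) • r.right w)) ⊗ₜ[K] P v.1 := by
              intro w _
              simp only [map_smul, TensorProduct.tmul_smul, ← TensorProduct.smul_tmul']
            rw [Finset.sum_congr rfl e, ← TensorProduct.sum_tmul, ← map_sum,
              ← TensorProduct.tmul_sum, ← map_sum, sum_counit_smul r]
    rw [Finset.sum_congr rfl lhs_u]
    set F : (A ⊗[K] H) ⊗[K] H →ₗ[K] A ⊗[K] A :=
      (TensorProduct.comm K A A).toLinearMap ∘ₗ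
        TensorProduct.map (act ∘ₗ lTensor A (HopfAlgebra.antipode (R := K)))
          (act ∘ₗ TensorProduct.mk K A H u.1 ∘ₗ (HopfAlgebra.antipode (R := K) (A := H))) with hF
    have F_apply1 : ∀ (w : A ⊗[K] H) (k : H), F (w ⊗ₜ[K] k)
        = act (u.1 ⊗ₜ[K] HopfAlgebra.antipode (R := K) k) ⊗ₜ[K]
            act ((lTensor A (HopfAlgebra.antipode (R := K))) w) := by
      intro w k
      simp [hF]
    have co_u := LinearMap.congr_fun ρco u.2
    simp only [LinearMap.comp_apply] at co_u
    have h1 : (rTensor H ρ) (ρ u.2) = ∑ v ∈ sρ u, ρ v.1 ⊗ₜ[K] v.2 := by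
      rw [hsρ u hu, map_sum]; simp only [rTensor_tmul]
    have h2 : ((TensorProduct.assoc K A H H).symm.toLinearMap) ((lTensor A
        (Coalgebra.comul (R := K))) (ρ u.2)) = ∑ v ∈ sρ u,
          ∑ w ∈ (Coalgebra.Repr.arbitrary K v.2).index,
          (v.1 ⊗ₜ[K] (Coalgebra.Repr.arbitrary K v.2).left w) ⊗ₜ[K]
            (Coalgebra.Repr.arbitrary K v.2).right w := by
      rw [hsρ u hu, map_sum, map_sum]
      apply Finset.sum_congr rfl; intro v _
      rw [lTensor_tmul, ← (Coalgebra.Repr.arbitrary K v.2).eq, TensorProduct.tmul_sum, map_sum]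
      apply Finset.sum_congr rfl; intro w _
      simp
    have h3 : ∑ v ∈ sρ u, ρ v.1 ⊗ₜ[K] v.2 = ∑ v ∈ sρ u,
        ∑ w ∈ (Coalgebra.Repr.arbitrary K v.2).index,
          (v.1 ⊗ₜ[K] (Coalgebra.Repr.arbitrary K v.2).left w) ⊗ₜ[K]
            (Coalgebra.Repr.arbitrary K v.2).right w := by
      rw [← h1, ← h2, co_u]
    have h5 := congrArg F h3
    rw [map_sum, map_sum] at h5
    calc ∑ v ∈ sρ u, act (u.1 ⊗ₜ[K] HopfAlgebra.antipode (R := K) v.2) ⊗ₜ[K] P v.1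
        = ∑ v ∈ sρ u, F (ρ v.1 ⊗ₜ[K] v.2) := by
          apply Finset.sum_congr rfl; intro v _
          rw [F_apply1, ← hPapp]
      _ = ∑ v ∈ sρ u, ∑ w ∈ (Coalgebra.Repr.arbitrary K v.2).index,
            act (u.1 ⊗ₜ[K] HopfAlgebra.antipode (R := K)
              ((Coalgebra.Repr.arbitrary K v.2).right w)) ⊗ₜ[K]
              act (v.1 ⊗ₜ[K] HopfAlgebra.antipode (R := K)
                ((Coalgebra.Repr.arbitrary K v.2).left w)) := by
          rw [h5]
          apply Finset.sum_congr rfl; intro v _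
          rw [map_sum]
          apply Finset.sum_congr rfl; intro w _
          rw [F_apply1]
          simp only [lTensor_tmul]
  have Ha' : ∀ c : A, (rTensor A P) (D (P c)) = (TensorProduct.map P P) (D c) := by
    intro c
    obtain ⟨sD, hsD⟩ := TensorProduct.exists_finset (D c)
    set sρ : (A × A) → Finset (A × H) := fun u => (TensorProduct.exists_finset (ρ u.2)).choose
      with hsρdef
    have hsρ : ∀ u ∈ sD, ρ u.2 = ∑ v ∈ sρ u, v.1 ⊗ₜ[K] v.2 := fun u _ =>
      (TensorProduct.exists_finset (ρ u.2)).choose_spec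
    rw [star c sD hsD sρ hsρ, hsD, map_sum, map_sum]
    apply Finset.sum_congr rfl; intro u hu
    rw [map_sum]
    simp only [TensorProduct.map_tmul]
    calc ∑ v ∈ sρ u, (rTensor A P) (∑ w ∈ (Coalgebra.Repr.arbitrary K v.2).index,
          act (u.1 ⊗ₜ[K] HopfAlgebra.antipode (R := K) ((Coalgebra.Repr.arbitrary K v.2).right w))
            ⊗ₜ[K] act (v.1 ⊗ₜ[K] HopfAlgebra.antipode (R := K)
              ((Coalgebra.Repr.arbitrary K v.2).left w)))
        = ∑ v ∈ sρ u, P u.1 ⊗ₜ[K] act (v.1 ⊗ₜ[K] HopfAlgebra.antipode (R := K) v.2) := by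
          apply Finset.sum_congr rfl; intro v _
          set r := Coalgebra.Repr.arbitrary K v.2 with hrv
          rw [map_sum]
          have e : ∀ w ∈ r.index, (rTensor A P)
              (act (u.1 ⊗ₜ[K] HopfAlgebra.antipode (R := K) (r.right w)) ⊗ₜ[K]
                act (v.1 ⊗ₜ[K] HopfAlgebra.antipode (R := K) (r.left w)))
              = P u.1 ⊗ₜ[K] act (v.1 ⊗ₜ[K] HopfAlgebra.antipode (R := K)
                  (Coalgebra.counit (R := K) (r.right w) • r.left w)) := by
            intro w _
            rw [rTensor_tmul, L2, counit_antipode]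
            simp only [map_smul, TensorProduct.tmul_smul, ← TensorProduct.smul_tmul']
          rw [Finset.sum_congr rfl e, ← TensorProduct.tmul_sum, ← map_sum,
            ← TensorProduct.tmul_sum, ← map_sum, sum_smul_counit r]
      _ = P u.1 ⊗ₜ[K] P u.2 := by
          rw [← TensorProduct.tmul_sum, ← Pexp u.2 (sρ u) (hsρ u hu)]
  refine ⟨?_, ?_⟩
  · intro x y
    rw [Hb x y, Ha x y]
    abel
  · unfold IsRotaBaxterCoalgebra
    ext c
    simp only [LinearMap.add_apply, LinearMap.comp_apply, LinearMap.smul_apply]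
    rw [Hb' c, Ha' c]
    simp only [neg_smul, one_smul]
    abel
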